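/- Let G be a finite group and x ∈ G a real element of odd order. Then x lies in the commutator subgroup G′ of G. Consequently, the subgroup generated by all real elements of odd order (the real core R(G)) is contained in G′. -/

import Mathlib

/-- Every real element of odd order of a finite group lies in the commutator subgroup;
consequently the real core (generated by all real elements of odd order) is contained
in the commutator subgroup. -/
theorem real_core_le_commutator {G : Type*} [Group G] [Finite G] :
    (∀ x : G, Odd (orderOf x) → (∃ g : G, g⁻¹ * x * g = x⁻¹) → x ∈ commutator G) ∧
    Subgroup.closure {x : G | Odd (orderOf x) ∧ ∃ g : G, g⁻¹ * x * g = x⁻¹} ≤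
      commutator G := by
  have key : ∀ x : G, Odd (orderOf x) → (∃ g : G, g⁻¹ * x * g = x⁻¹) → x ∈ commutator G := by
    rintro x ⟨k, hk⟩ ⟨g, hg⟩
    have h2 : x⁻¹ * x⁻¹ ∈ commutator G := by
      open scoped commutatorElement in
      have heq : ⁅g⁻¹, x⁆ = x⁻¹ * x⁻¹ := by
        calc ⁅g⁻¹, x⁆ = (g⁻¹ * x * g) * x⁻¹ := by
              rw [commutatorElement_def, inv_inv]
          _ = x⁻¹ * x⁻¹ := by rw [hg]
      rw [← heq, commutator_def]
      exact Subgroup.commutator_mem_commutator (Subgroup.mem_top _) (Subgroup.mem_top _)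
    have hx2 : x ^ 2 ∈ commutator G := by
      have := (commutator G).inv_mem h2
      simpa [pow_two, mul_inv_rev] using this
    have hx : x = (x ^ 2) ^ (k + 1) := by
      rw [← pow_mul]
      have h : 2 * (k + 1) = orderOf x + 1 := by omega
      rw [h, pow_succ, pow_orderOf_eq_one, one_mul]
    rw [hx]
    exact Subgroup.pow_mem _ hx2 _
  exact ⟨key, (Subgroup.closure_le _).2 fun x hx => key x hx.1 hx.2⟩
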